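/- arXiv:2406.06348 — 5 statements merged into one kernel-verified Lean document; each statement's English description precedes it below -/
import Mathlib

section
/- Let G* be a DAG and S a subset of its vertices with u, v ∈ S non-adjacent in G*. Then any path Π between u and v entirely contained in S with length greater than 1 is not an inducing path relative to V \ S. -/
/-- The condition for a path `π` of length `n` (with endpoints `π 0` and `π n`)
to be an inducing path relative to `V \ S` in `E`: every non-endpoint vertex in
`S` is a collider on the path and an ancestor of one of the endpoints. -/
def InducingCond {V : Type*} (E : V → V → Prop) (S : Set V) (n : ℕ) (π : ℕ → V) : Prop :=
  ∀ i, 0 < i → i < n → π i ∈ S →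
    (E (π (i - 1)) (π i) ∧ E (π (i + 1)) (π i)) ∧
    (Relation.TransGen E (π i) (π 0) ∨ Relation.TransGen E (π i) (π n))

/-- Any path between non-adjacent `u, v ∈ S`, entirely contained in `S`,
of length greater than 1, is not an inducing path relative to `V \ S`. -/
theorem stmt1 {V : Type*} (E : V → V → Prop) (S : Set V)
    (hacyc : ∀ x, ¬ Relation.TransGen E x x)
    (u v : V) (hu : u ∈ S) (hv : v ∈ S)
    (hnadj : ¬ (E u v ∨ E v u))
    (n : ℕ) (hn : 1 < n) (π : ℕ → V)
    (h0 : π 0 = u) (hend : π n = v)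
    (hinj : ∀ i ≤ n, ∀ j ≤ n, π i = π j → i = j)
    (hadj : ∀ i < n, E (π i) (π (i + 1)) ∨ E (π (i + 1)) (π i))
    (hinS : ∀ i ≤ n, π i ∈ S) :
    ¬ InducingCond E S n π := by
  intro hind
  have h1 := hind 1 (by omega) (by omega) (hinS 1 (by omega))
  have h2 := hind (n-1) (by omega) (by omega) (hinS (n-1) (by omega))
  have hnn : n - 1 + 1 = n := by omega
  rw [hnn] at h2
  obtain ⟨⟨e01, -⟩, a1⟩ := h1
  obtain ⟨⟨-, en⟩, a2⟩ := h2
  rcases a2 with a2 | a2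
  · rcases a1 with a1 | a1
    · exact hacyc (π 0) (Relation.TransGen.head e01 a1)
    · exact hacyc (π (n-1)) (((a2.tail e01) |>.trans a1).tail en)
  · exact hacyc (π n) (Relation.TransGen.head en a2)
end

section
/- Let G* be a DAG, S a subset of vertices, and u, v ∈ S non-adjacent in G*. Any path Π = (u, q_1, ..., q_k, v) between u and v such that {u, q_1, q_2} ⊆ S or {q_{k-1}, q_k, v} ⊆ S is not an inducing path between u and v relative to V \ S. -/
/-- Any path `Π = (u, q_1, …, q_k, v)` between non-adjacent `u, v ∈ S` such that
`{u, q_1, q_2} ⊆ S` or `{q_{k-1}, q_k, v} ⊆ S` is not an inducing path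
relative to `V \ S`. -/
theorem stmt2 {V : Type*} (E : V → V → Prop) (S : Set V)
    (hacyc : ∀ x, ¬ Relation.TransGen E x x)
    (u v : V) (hu : u ∈ S) (hv : v ∈ S)
    (hnadj : ¬ (E u v ∨ E v u))
    (n : ℕ) (hn : 3 ≤ n) (π : ℕ → V)
    (h0 : π 0 = u) (hend : π n = v)
    (hinj : ∀ i ≤ n, ∀ j ≤ n, π i = π j → i = j)
    (hadj : ∀ i < n, E (π i) (π (i + 1)) ∨ E (π (i + 1)) (π i))
    (hpre : (π 0 ∈ S ∧ π 1 ∈ S ∧ π 2 ∈ S) ∨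
            (π (n - 2) ∈ S ∧ π (n - 1) ∈ S ∧ π n ∈ S)) :
    ¬ InducingCond E S n π := by
  intro h
  rcases hpre with ⟨_, h1, h2⟩ | ⟨h1, h2, _⟩
  · -- colliders at 1 and 2 give a 2-cycle π 1 → π 2 → π 1
    have c1 := ((h 1 (by omega) (by omega) h1).1).2
    have c2 := ((h 2 (by omega) (by omega) h2).1).1
    exact hacyc (π 1) (Relation.TransGen.head (show E (π 1) (π (1+1)) from c2)
      (Relation.TransGen.single c1))
  · -- colliders at n-2 and n-1 give a 2-cycle
    have c1 := ((h (n-2) (by omega) (by omega) h1).1).2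
    have c2 := ((h (n-1) (by omega) (by omega) h2).1).1
    have e1 : n - 2 + 1 = n - 1 := by omega
    have e2 : n - 1 - 1 = n - 2 := by omega
    rw [e1] at c1
    rw [e2] at c2
    exact hacyc (π (n-1)) (Relation.TransGen.head c1 (Relation.TransGen.single c2))
end

section
/- Let G* be a DAG, S a subset of vertices, and u, v ∈ S non-adjacent in G*. If Π = (u, q_1, ..., q_k, v) is an inducing path between u and v relative to V \ S with q_1 ∈ S and q_k ∈ S (and q_1 ≠ q_k), then q_1 is an ancestor of v in G*, v is an ancestor of q_k in G*, u is an ancestor of q_1, and q_k is an ancestor of u — a contradiction with acyclicity. Hence no such inducing path exists. -/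
/-- If `Π = (u, q_1, …, q_k, v)` is an inducing path relative to `V \ S`
between non-adjacent `u, v ∈ S` with `q_1 ∈ S` and `q_k ∈ S` (and `q_1 ≠ q_k`),
then `u` is an ancestor of `q_1`, `q_1` of `v`, `v` of `q_k`, and `q_k` of `u`
— contradicting acyclicity. Hence no such inducing path exists. -/
theorem stmt4 {V : Type*} (E : V → V → Prop) (S : Set V)
    (hacyc : ∀ x, ¬ Relation.TransGen E x x)
    (u v : V) (hu : u ∈ S) (hv : v ∈ S)
    (hnadj : ¬ (E u v ∨ E v u))
    (n : ℕ) (hn : 3 ≤ n) (π : ℕ → V)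
    (h0 : π 0 = u) (hend : π n = v)
    (hinj : ∀ i ≤ n, ∀ j ≤ n, π i = π j → i = j)
    (hadj : ∀ i < n, E (π i) (π (i + 1)) ∨ E (π (i + 1)) (π i))
    (hq1 : π 1 ∈ S) (hqk : π (n - 1) ∈ S) (hne : π 1 ≠ π (n - 1))
    (hind : InducingCond E S n π) :
    False := by
  obtain ⟨⟨hE0, _⟩, hanc1⟩ := hind 1 (by omega) (by omega) hq1
  obtain ⟨⟨_, hEn⟩, hanck⟩ := hind (n - 1) (by omega) (by omega) hqk
  norm_num at hE0
  have hE0' : E u (π 1) := by rwa [h0] at hE0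
  have hn1 : n - 1 + 1 = n := by omega
  have hEn' : E v (π (n - 1)) := by rw [hn1] at hEn; rwa [hend] at hEn
  rw [h0, hend] at hanc1 hanck
  have h1v : Relation.TransGen E (π 1) v := by
    rcases hanc1 with h | h
    · exact absurd (h.head hE0') (hacyc u)
    · exact h
  have hku : Relation.TransGen E (π (n - 1)) u := by
    rcases hanck with h | h
    · exact h
    · exact absurd (h.head hEn') (hacyc v)
  exact hacyc u (((h1v.head hE0').trans (hku.head hEn')))
end

section
/- Let G* be a DAG whose underlying undirected graph is a subgraph of an undirected superstructure G (on the same vertex set), and let {S_1, ..., S_N} be a vertex-covering partition of G with causal expansion S'_i = S_i ∪ ∂_out(S_i) (boundaries taken in G). Then for every unshielded collider u → v ← w in G* there exists i such that {u, v, w} ⊆ S'_i. -/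
/-- The outer vertex boundary of a set `S` in an undirected graph `G`. -/
def outBoundary {V : Type*} (G : SimpleGraph V) (S : Set V) : Set V :=
  {v | v ∉ S ∧ ∃ u ∈ S, G.Adj u v}

/-- Let `E` be a DAG whose underlying undirected graph is a subgraph of an
undirected superstructure `G` on the same vertices, and `{S_1, …, S_N}` a
vertex-covering partition of `G` with causal expansion `S'_i = S_i ∪ ∂_out(S_i)`.
Then every unshielded collider `u → v ← w` of the DAG has `{u, v, w} ⊆ S'_i`
for some `i`. -/
theorem stmt6 {V : Type*} (E : V → V → Prop)
    (hacyc : ∀ x, ¬ Relation.TransGen E x x)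
    (G : SimpleGraph V)
    (hsuper : ∀ u v, E u v → G.Adj u v)
    (N : ℕ) (S : Fin N → Set V)
    (hcover : (⋃ i, S i) = Set.univ)
    (u v w : V) (huv : E u v) (hwv : E w v) (hne : u ≠ w)
    (hunshielded : ¬ (E u w ∨ E w u)) :
    ∃ i, u ∈ S i ∪ outBoundary G (S i) ∧ v ∈ S i ∪ outBoundary G (S i) ∧
      w ∈ S i ∪ outBoundary G (S i) := by
  have hv : v ∈ ⋃ i, S i := hcover ▸ Set.mem_univ v
  obtain ⟨i, hvi⟩ := Set.mem_iUnion.mp hv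
  refine ⟨i, ?_, Or.inl hvi, ?_⟩
  · by_cases hu : u ∈ S i
    · exact Or.inl hu
    · exact Or.inr ⟨hu, v, hvi, (hsuper u v huv).symm⟩
  · by_cases hw : w ∈ S i
    · exact Or.inl hw
    · exact Or.inr ⟨hw, v, hvi, (hsuper w v hwv).symm⟩
end

section
/- Let Π = (u, q_1, ..., q_k, v) be an inducing path in DAG G* relative to V \ S with both a prefix {u, q_1} ⊆ S and suffix {q_k, v} ⊆ S where q_1, q_k are distinct non-endpoints. Then u is an ancestor of q_1, q_1 is an ancestor of v, v is an ancestor of q_k, and q_k is an ancestor of u in G*; hence G* contains a cycle, contradiction. Therefore no such inducing path exists when u and v are non-adjacent in G*. -/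
/-- An inducing path `(u, q_1, …, q_k, v)` relative to `V \ S` with prefix
`{u, q_1} ⊆ S` and suffix `{q_k, v} ⊆ S`, `q_1 ≠ q_k` non-endpoints, would
give `u` ancestor of `q_1`, `q_1` of `v`, `v` of `q_k`, `q_k` of `u` — a
directed cycle. Hence no such inducing path exists between non-adjacent
`u, v`. -/
theorem stmt17 {V : Type*} (E : V → V → Prop) (S : Set V)
    (hacyc : ∀ x, ¬ Relation.TransGen E x x)
    (u v : V) (hu : u ∈ S) (hv : v ∈ S)
    (hnadj : ¬ (E u v ∨ E v u))
    (n : ℕ) (hn : 3 ≤ n) (π : ℕ → V)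
    (h0 : π 0 = u) (hend : π n = v)
    (hinj : ∀ i ≤ n, ∀ j ≤ n, π i = π j → i = j)
    (hadj : ∀ i < n, E (π i) (π (i + 1)) ∨ E (π (i + 1)) (π i))
    (hq1 : π 1 ∈ S) (hqk : π (n - 1) ∈ S) (hne : π 1 ≠ π (n - 1)) :
    ¬ InducingCond E S n π := by
  intro hind
  have h1 := hind 1 one_pos (by omega) hq1
  have h2 := hind (n - 1) (by omega) (by omega) hqk
  have e01 : E u (π 1) := by
    have := h1.1.1
    simpa [h0] using this
  have hsucc : n - 1 + 1 = n := by omega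
  have evk : E v (π (n - 1)) := by
    have := h2.1.2
    rwa [hsucc, hend] at this
  have t1 : Relation.TransGen E u (π 1) := Relation.TransGen.single e01
  have tv : Relation.TransGen E v (π (n - 1)) := Relation.TransGen.single evk
  have anc1 : Relation.TransGen E (π 1) v := by
    rcases h1.2 with h | h
    · rw [h0] at h
      exact absurd (t1.trans h) (hacyc u)
    · rwa [hend] at h
  have anck : Relation.TransGen E (π (n - 1)) u := by
    rcases h2.2 with h | h
    · rwa [h0] at h
    · rw [hend] at h
      exact absurd (tv.trans h) (hacyc v)
  exact hacyc u (t1.trans (anc1.trans (tv.trans anck)))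
end
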